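/- arXiv:2505.08594 — 2 statements merged into one kernel-verified Lean document; each statement's English description precedes it below -/
import Mathlib

section
/- Define f_B(B) = ((p+ν)/n)∑_{i=1}^n log(1 + (h_i + tr(B G_i))/ν) + tr(B R) + ρ‖B‖_F² + (ρ/2)·1_rᵀBBᵀ1_r, and f_B^S(B; B₀) = tr(B H₀) + ρ‖B‖_F² + (ρ/2)·1_rᵀBBᵀ1_r + C(B₀), where H₀ = R + ((p+ν)/n)∑_i G_i/(h_i + tr(B₀G_i) + ν) and C(B₀) is chosen so that f_B^S(B₀;B₀) = f_B(B₀). Then f_B^S(B;B₀) ≥ f_B(B) for all B with h_i + tr(B G_i) > -ν for all i. -/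
open Matrix BigOperators

theorem surrogate_majorizes_fB (p n r k : ℕ) (ν ρ : ℝ) (hν : 0 < ν) (hρ : 0 < ρ)
    (h : Fin n → ℝ) (G : Fin n → Matrix (Fin k) (Fin r) ℝ)
    (R : Matrix (Fin k) (Fin r) ℝ) (B B₀ : Matrix (Fin r) (Fin k) ℝ)
    (hB₀ : ∀ i, -ν < h i + (B₀ * G i).trace)
    (hB : ∀ i, -ν < h i + (B * G i).trace) :
    let quad : Matrix (Fin r) (Fin k) ℝ → ℝ := fun X =>
      ρ * (Xᵀ * X).trace + ρ / 2 * ((fun _ => (1 : ℝ)) ⬝ᵥ ((X * Xᵀ) *ᵥ (fun _ => (1 : ℝ))))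
    let fB : Matrix (Fin r) (Fin k) ℝ → ℝ := fun X =>
      ((p + ν) / n) * ∑ i, Real.log (1 + (h i + (X * G i).trace) / ν) + (X * R).trace + quad X
    let H₀ := R + (((p + ν) / n) • ∑ i, (h i + (B₀ * G i).trace + ν)⁻¹ • G i)
    let fBS : Matrix (Fin r) (Fin k) ℝ → ℝ := fun X =>
      (X * H₀).trace + quad X + (fB B₀ - ((B₀ * H₀).trace + quad B₀))
    fB B ≤ fBS B := by
  intro quad fB H₀ fBS
  set c : ℝ := (p + ν) / n with hc
  have hc0 : 0 ≤ c := by positivity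
  have key : ∀ i : Fin n,
      Real.log (1 + (h i + (B * G i).trace) / ν)
        ≤ Real.log (1 + (h i + (B₀ * G i).trace) / ν)
          + (h i + (B₀ * G i).trace + ν)⁻¹ * ((B * G i).trace - (B₀ * G i).trace) := by
    intro i
    set a := h i + (B₀ * G i).trace + ν with ha
    set b := h i + (B * G i).trace + ν with hb
    have ha0 : 0 < a := by have := hB₀ i; rw [ha]; linarith
    have hb0 : 0 < b := by have := hB i; rw [hb]; linarith
    have h1 : (1 : ℝ) + (h i + (B * G i).trace) / ν = b / ν := by
      rw [hb]; field_simp; ring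
    have h2 : (1 : ℝ) + (h i + (B₀ * G i).trace) / ν = a / ν := by
      rw [ha]; field_simp; ring
    rw [h1, h2, Real.log_div (ne_of_gt hb0) (ne_of_gt hν),
        Real.log_div (ne_of_gt ha0) (ne_of_gt hν)]
    have hlog := Real.log_le_sub_one_of_pos (show 0 < b / a by positivity)
    rw [Real.log_div (ne_of_gt hb0) (ne_of_gt ha0)] at hlog
    have hfrac : b / a - 1 = a⁻¹ * (b - a) := by field_simp
    have hba : (B * G i).trace - (B₀ * G i).trace = b - a := by rw [ha, hb]; ring
    rw [hba]
    nlinarith [hlog, hfrac]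
  have hsum : (∑ i, Real.log (1 + (h i + (B * G i).trace) / ν))
      ≤ (∑ i, Real.log (1 + (h i + (B₀ * G i).trace) / ν))
        + ∑ i, (h i + (B₀ * G i).trace + ν)⁻¹ * ((B * G i).trace - (B₀ * G i).trace) := by
    rw [← Finset.sum_add_distrib]
    exact Finset.sum_le_sum fun i _ => key i
  have trace_expand : ∀ X : Matrix (Fin r) (Fin k) ℝ,
      (X * H₀).trace = (X * R).trace
        + c * ∑ i, (h i + (B₀ * G i).trace + ν)⁻¹ * (X * G i).trace := by
    intro X
    show (X * (R + c • ∑ i, (h i + (B₀ * G i).trace + ν)⁻¹ • G i)).trace = _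
    rw [Matrix.mul_add, Matrix.trace_add, Matrix.mul_smul, Matrix.trace_smul,
        Finset.mul_sum]
    congr 1
    rw [Matrix.mul_sum, Matrix.trace_sum, smul_eq_mul, Finset.mul_sum]
    congr 1
    funext i
    rw [Matrix.mul_smul, Matrix.trace_smul, smul_eq_mul]
  have hBH := trace_expand B
  have hB0H := trace_expand B₀
  have hmul : c * (∑ i, Real.log (1 + (h i + (B * G i).trace) / ν))
      ≤ c * ((∑ i, Real.log (1 + (h i + (B₀ * G i).trace) / ν))
        + ∑ i, (h i + (B₀ * G i).trace + ν)⁻¹ * ((B * G i).trace - (B₀ * G i).trace)) :=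
    mul_le_mul_of_nonneg_left hsum hc0
  have hsplit : (∑ i, (h i + (B₀ * G i).trace + ν)⁻¹ * ((B * G i).trace - (B₀ * G i).trace))
      = (∑ i, (h i + (B₀ * G i).trace + ν)⁻¹ * (B * G i).trace)
        - ∑ i, (h i + (B₀ * G i).trace + ν)⁻¹ * (B₀ * G i).trace := by
    rw [← Finset.sum_sub_distrib]
    congr 1; funext i; ring
  rw [hsplit] at hmul
  show c * ∑ i, Real.log (1 + (h i + (B * G i).trace) / ν) + (B * R).trace + quad B
      ≤ (B * H₀).trace + quad B
        + ((c * ∑ i, Real.log (1 + (h i + (B₀ * G i).trace) / ν) + (B₀ * R).trace + quad B₀)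
          - ((B₀ * H₀).trace + quad B₀))
  rw [hBH, hB0H]
  nlinarith [hmul]
end

section
/- Let x₀ ∈ ℝ^n and α ∈ ℝ be such that, setting x* = max(0, x₀ + α·1) componentwise, we have ∑ᵢ x*ᵢ = 1. Then x* is the Euclidean projection of x₀ onto the probability simplex {x ≥ 0 : ∑ᵢ xᵢ = 1}. -/
open BigOperators

theorem simplex_projection_thresholding (n : ℕ) (x₀ : Fin n → ℝ) (α : ℝ)
    (x : Fin n → ℝ) (hx : ∀ i, x i = max 0 (x₀ i + α)) (hsum : ∑ i, x i = 1) :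
    ∀ y : Fin n → ℝ, (∀ i, 0 ≤ y i) → ∑ i, y i = 1 →
      ∑ i, (x i - x₀ i) ^ 2 ≤ ∑ i, (y i - x₀ i) ^ 2 := by
  intro y hy hysum
  have key : ∀ i ∈ Finset.univ, (x i - x₀ i) ^ 2 + 2 * α * (y i - x i) ≤ (y i - x₀ i) ^ 2 := by
    intro i _
    rcases le_or_gt (x₀ i + α) 0 with h | h
    · have hxi : x i = 0 := by rw [hx i]; exact max_eq_left h
      nlinarith [hy i, sq_nonneg (y i - x i)]
    · have hxi : x i = x₀ i + α := by rw [hx i]; exact max_eq_right h.le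
      nlinarith [sq_nonneg (y i - x₀ i - α)]
  have h := Finset.sum_le_sum key
  rw [Finset.sum_add_distrib, ← Finset.mul_sum, Finset.sum_sub_distrib, hsum, hysum] at h
  linarith
end
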